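/- Let q ≥ 1, and let x₀,…,x_q be distinct real numbers with x₀ = −1 and x_q = 1. Suppose the weights w₀,…,w_q ∈ ℝ satisfy the exactness condition Σₖ wₖ P(xₖ) = ∫_{−1}^{1} P(t) dt for every real polynomial P of degree at most 2q − 1. Let φ₀,…,φ_q be the Lagrange interpolation polynomials at the nodes x₀,…,x_q, let M be the (q+1)×(q+1) matrix with Mᵢⱼ = ∫_{−1}^{1} φᵢ(t)φⱼ(t) dt, and let M̂ = diag(w₀,…,w_q). Then M̂ − M is positive semidefinite. -/

import Mathlib

open Matrix Polynomial

/-- One-dimensional core of the paper's Lemma 3.1 (spectral_fem): for a quadrature rule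
with q+1 distinct nodes including the endpoints ±1 that is exact on polynomials of degree
≤ 2q−1 (the Gauss–Lobatto rule), the diagonal matrix of weights dominates the consistent
mass matrix of the Lagrange basis in the Loewner order. -/
theorem gauss_lobatto_lumped_mass_dominates {q : ℕ} (hq : 1 ≤ q)
    (x : Fin (q + 1) → ℝ) (hinj : Function.Injective x)
    (hx0 : x 0 = -1) (hxq : x (Fin.last q) = 1)
    (w : Fin (q + 1) → ℝ)
    (hexact : ∀ P : Polynomial ℝ, P.degree ≤ (2 * q - 1 : ℕ) →
      ∑ k, w k * P.eval (x k) = ∫ t in (-1 : ℝ)..1, P.eval t)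
    (M : Matrix (Fin (q + 1)) (Fin (q + 1)) ℝ)
    (hM : ∀ i j, M i j = ∫ t in (-1 : ℝ)..1,
      (Lagrange.basis Finset.univ x i).eval t * (Lagrange.basis Finset.univ x j).eval t) :
    (Matrix.diagonal w - M).PosSemidef := by
  classical
  have hinjOn : Set.InjOn x (Finset.univ : Finset (Fin (q+1))) := Set.injOn_of_injective hinj
  set φ : Fin (q+1) → Polynomial ℝ := fun i => Lagrange.basis Finset.univ x i with hφ
  have hci : ∀ P : Polynomial ℝ,
      IntervalIntegrable (fun t => P.eval t) MeasureTheory.volume (-1:ℝ) 1 :=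
    fun P => (P.continuous).intervalIntegrable _ _
  -- symmetry of M
  have hMcomm : ∀ i j, M i j = M j i := by
    intro i j
    rw [hM i j, hM j i]
    exact intervalIntegral.integral_congr fun t _ => mul_comm _ _
  rw [Matrix.posSemidef_iff_dotProduct_mulVec]
  constructor
  · -- Hermitian
    ext i j
    simp only [conjTranspose_apply, Matrix.sub_apply, star_trivial, Matrix.diagonal_apply]
    rw [hMcomm j i]
    by_cases h : i = j <;> simp [h, eq_comm]
  intro v
  -- the interpolating polynomial of v
  set p : Polynomial ℝ := Lagrange.interpolate Finset.univ x v with hp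
  have hcard : (((Finset.univ : Finset (Fin (q+1))).card : ℕ) : WithBot ℕ) = ((q+1 : ℕ) : WithBot ℕ) := by
    simp
  have hdeg_aux : ∀ r : Polynomial ℝ, r.degree < ((q+1 : ℕ) : WithBot ℕ) → r.natDegree ≤ q := by
    intro r hr
    rcases eq_or_ne r 0 with rfl | h
    · simp
    · exact Nat.lt_succ_iff.mp ((natDegree_lt_iff_degree_lt h).2 hr)
  have hpdeg : p.natDegree ≤ q :=
    hdeg_aux p (by rw [← hcard]; exact Lagrange.degree_interpolate_lt v hinjOn)
  have heval : ∀ k, p.eval (x k) = v k :=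
    fun k => Lagrange.eval_interpolate_at_node v hinjOn (Finset.mem_univ k)
  have hpeval : ∀ t, p.eval t = ∑ j, v j * (φ j).eval t := by
    intro t
    rw [hp, Lagrange.interpolate_apply]
    simp [eval_finset_sum, hφ]
  -- the nodal polynomial
  set ω : Polynomial ℝ := Lagrange.nodal Finset.univ x with hω
  have hωmonic : ω.Monic := Lagrange.nodal_monic
  have hωdeg : ω.natDegree = q + 1 := by simp [hω, Lagrange.natDegree_nodal]
  have hωeval : ∀ k, ω.eval (x k) = 0 := fun k => Lagrange.eval_nodal_at_node (Finset.mem_univ k)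
  -- orthogonality from exactness
  have horth : ∀ u : Polynomial ℝ, (ω * u).natDegree ≤ 2*q - 1 →
      (∫ t in (-1:ℝ)..1, (ω*u).eval t) = 0 := by
    intro u hu
    rw [← hexact _ (natDegree_le_iff_degree_le.mp hu)]
    exact Finset.sum_eq_zero fun k _ => by simp [eval_mul, hωeval k]
  -- the interpolant of p²
  set r : Polynomial ℝ := Lagrange.interpolate Finset.univ x (fun k => (v k)^2) with hr
  have hrdeg : r.natDegree ≤ q :=
    hdeg_aux r (by rw [← hcard]; exact Lagrange.degree_interpolate_lt _ hinjOn)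
  have hreval : ∀ k, r.eval (x k) = (v k)^2 :=
    fun k => Lagrange.eval_interpolate_at_node _ hinjOn (Finset.mem_univ k)
  -- divisibility
  have hdvd : ω ∣ p^2 - r := by
    rw [hω, Lagrange.nodal]
    refine Finset.prod_dvd_of_coprime ?_ ?_
    · exact fun i _ j _ hij => Polynomial.pairwise_coprime_X_sub_C hinj hij
    · intro k _
      rw [dvd_iff_isRoot]
      simp [IsRoot, eval_pow, heval k, hreval k]
  obtain ⟨s, hs⟩ := hdvd
  have hsdeg : s.natDegree ≤ q - 1 := by
    rcases eq_or_ne s 0 with rfl | hne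
    · simp
    · have h1 : (ω * s).natDegree = (q+1) + s.natDegree := by
        rw [natDegree_mul hωmonic.ne_zero hne, hωdeg]
      have h2 : (p^2 - r).natDegree ≤ 2*q := by
        refine le_trans (natDegree_sub_le _ _) ?_
        have : (p^2).natDegree ≤ 2*q := by
          rw [natDegree_pow]; omega
        omega
      rw [hs] at h2
      omega
  set a : ℝ := s.coeff (q-1) with ha
  have ha_eq : a = (p.coeff q)^2 := by
    have h1 : (p^2).coeff (q + q) = p.coeff q * p.coeff q := by
      rw [pow_two]
      exact coeff_mul_add_eq_of_natDegree_le hpdeg hpdeg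
    have h2 : (ω*s).coeff ((q+1) + (q-1)) = ω.coeff (q+1) * s.coeff (q-1) :=
      coeff_mul_add_eq_of_natDegree_le (le_of_eq hωdeg) hsdeg
    have h3 : ω.coeff (q+1) = 1 := by
      have := hωmonic.coeff_natDegree
      rwa [hωdeg] at this
    have h4 : r.coeff (q + q) = 0 :=
      coeff_eq_zero_of_natDegree_lt (by omega)
    have h5 : (q+1) + (q-1) = q + q := by omega
    have h6 : (p^2 - r).coeff (q+q) = (ω*s).coeff (q+q) := by rw [hs]
    rw [h5] at h2
    rw [coeff_sub, h1, h4, sub_zero, h2, h3, one_mul] at h6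
    rw [ha, ← h6, pow_two]
  have ha_nonneg : 0 ≤ a := by rw [ha_eq]; positivity
  -- decomposition of ω
  have hlast_ne : (Fin.last q) ≠ (0 : Fin (q+1)) := by
    simp [Fin.ext_iff]
    omega
  have hlast_mem : Fin.last q ∈ (Finset.univ.erase (0 : Fin (q+1))) :=
    Finset.mem_erase.mpr ⟨hlast_ne, Finset.mem_univ _⟩
  set e : Finset (Fin (q+1)) := (Finset.univ.erase (0 : Fin (q+1))).erase (Fin.last q) with he
  set π : Polynomial ℝ := Lagrange.nodal e x with hπ
  have hπmonic : π.Monic := Lagrange.nodal_monic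
  have hω_decomp : ω = (X - C (x 0)) * ((X - C (x (Fin.last q))) * π) := by
    rw [hω, Lagrange.nodal_eq_mul_nodal_erase (Finset.mem_univ (0 : Fin (q+1))),
      Lagrange.nodal_eq_mul_nodal_erase hlast_mem]
  have hπdeg : π.natDegree = q - 1 := by
    rw [hπ, Lagrange.natDegree_nodal, he, Finset.card_erase_of_mem hlast_mem,
      Finset.card_erase_of_mem (Finset.mem_univ _)]
    simp
  -- split s = a π + u
  set u : Polynomial ℝ := s - C a * π with hu
  have hu_deg : u.degree < ((q-1 : ℕ) : WithBot ℕ) := by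
    rw [degree_lt_iff_coeff_zero]
    intro m hm
    have hm' : q - 1 ≤ m := by exact_mod_cast hm
    rw [hu, coeff_sub, coeff_C_mul]
    rcases eq_or_lt_of_le hm' with rfl | hlt
    · have hπc : π.coeff (q-1) = 1 := by
        have := hπmonic.coeff_natDegree
        rwa [hπdeg] at this
      rw [hπc, ← ha, mul_one, sub_self]
    · rw [coeff_eq_zero_of_natDegree_lt (lt_of_le_of_lt hsdeg hlt),
        coeff_eq_zero_of_natDegree_lt (by omega : π.natDegree < m), mul_zero, sub_self]
  have hs_split : s = C a * π + u := by rw [hu]; ring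
  -- the three integrals
  have hint_u : (∫ t in (-1:ℝ)..1, (ω*u).eval t) = 0 := by
    rcases eq_or_ne u 0 with h0 | hne
    · simp [h0]
    · apply horth
      have h1 : u.natDegree < q - 1 := (natDegree_lt_iff_degree_lt hne).2 hu_deg
      have h2 : (ω * u).natDegree ≤ ω.natDegree + u.natDegree := natDegree_mul_le
      omega
  have hint_pi : (∫ t in (-1:ℝ)..1, (ω*π).eval t) ≤ 0 := by
    have hneg : ∀ t ∈ Set.Icc (-1:ℝ) 1, (ω*π).eval t ≤ 0 := by
      intro t ht
      have hval : (ω*π).eval t = ((t - x 0) * (t - x (Fin.last q))) * (π.eval t)^2 := by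
        rw [hω_decomp]
        simp only [eval_mul, eval_sub, eval_X, eval_C]
        ring
      rw [hval, hx0, hxq]
      have h1 := ht.1
      have h2 := ht.2
      have h3 : (t - -1) * (t - 1) ≤ 0 := by nlinarith
      exact mul_nonpos_iff.mpr (Or.inr ⟨h3, sq_nonneg _⟩)
    have h := intervalIntegral.integral_nonneg (μ := MeasureTheory.volume) (f := fun t => -((ω*π).eval t))
      (by norm_num : (-1:ℝ) ≤ 1) (fun t ht => by simpa using hneg t ht)
    rw [intervalIntegral.integral_neg] at h
    linarith
  have hint_s : (∫ t in (-1:ℝ)..1, (ω*s).eval t) = a * ∫ t in (-1:ℝ)..1, (ω*π).eval t := by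
    have hsum : ω * s = ω * (C a * π) + ω * u := by rw [hs_split]; ring
    rw [hsum]
    have hstep : (∫ t in (-1:ℝ)..1, (ω * (C a * π) + ω * u).eval t) =
        (∫ t in (-1:ℝ)..1, (ω * (C a * π)).eval t) + ∫ t in (-1:ℝ)..1, (ω*u).eval t := by
      simp only [eval_add]
      exact intervalIntegral.integral_add (hci _) (hci _)
    rw [hstep, hint_u, add_zero]
    have : ∀ t : ℝ, (ω * (C a * π)).eval t = a * ((ω*π).eval t) := by
      intro t; simp only [eval_mul, eval_C]; ring
    simp_rw [this]
    exact intervalIntegral.integral_const_mul a _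
  -- quadrature equality for r
  have hA : (∑ k, w k * (v k)^2) = ∫ t in (-1:ℝ)..1, r.eval t := by
    rw [← hexact r (natDegree_le_iff_degree_le.mp (hrdeg.trans (by omega)))]
    exact Finset.sum_congr rfl fun k _ => by rw [hreval k]
  -- splitting ∫ p²
  have hp2 : (∫ t in (-1:ℝ)..1, (p^2).eval t) =
      (∫ t in (-1:ℝ)..1, (ω*s).eval t) + ∫ t in (-1:ℝ)..1, r.eval t := by
    have hps : p^2 = ω*s + r := by rw [← hs]; ring
    rw [hps]
    simp only [eval_add]
    exact intervalIntegral.integral_add (hci _) (hci _)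
  -- the quadratic form
  have hquad : star v ⬝ᵥ ((Matrix.diagonal w - M) *ᵥ v) =
      (∑ k, w k * (v k)^2) - ∫ t in (-1:ℝ)..1, (p^2).eval t := by
    rw [Matrix.sub_mulVec, dotProduct_sub]
    congr 1
    · simp only [dotProduct, Matrix.mulVec_diagonal, star_trivial]
      exact Finset.sum_congr rfl fun k _ => by ring
    · simp only [dotProduct, Matrix.mulVec, dotProduct, star_trivial]
      have hrow : ∀ i, (∑ j, M i j * v j) =
          ∫ t in (-1:ℝ)..1, (φ i).eval t * p.eval t := by
        intro i
        have h1 : ∀ j, M i j * v j =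
            ∫ t in (-1:ℝ)..1, (φ i).eval t * (φ j).eval t * v j := by
          intro j
          rw [hM i j, ← intervalIntegral.integral_mul_const]
        simp_rw [h1]
        rw [← intervalIntegral.integral_finset_sum (f := fun j t => (φ i).eval t * (φ j).eval t * v j) (fun j _ =>
          ((((φ i).continuous).mul ((φ j).continuous)).mul continuous_const).intervalIntegrable _ _)]
        refine intervalIntegral.integral_congr fun t _ => ?_
        rw [hpeval t, Finset.mul_sum]
        exact Finset.sum_congr rfl fun j _ => by ring
      simp_rw [hrow]
      have h2 : ∀ i, v i * ∫ t in (-1:ℝ)..1, (φ i).eval t * p.eval t =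
          ∫ t in (-1:ℝ)..1, v i * ((φ i).eval t * p.eval t) := by
        intro i
        rw [intervalIntegral.integral_const_mul]
      simp_rw [h2]
      rw [← intervalIntegral.integral_finset_sum (f := fun j t => v j * ((φ j).eval t * p.eval t)) (fun j _ =>
        (continuous_const.mul (((φ j).continuous).mul (p.continuous))).intervalIntegrable _ _)]
      refine intervalIntegral.integral_congr fun t _ => ?_
      rw [eval_pow, pow_two, hpeval t, Finset.sum_mul]
      refine Finset.sum_congr rfl fun j _ => by ring
  rw [hquad, hA, hp2, hint_s]
  have : a * (∫ t in (-1:ℝ)..1, (ω*π).eval t) ≤ 0 :=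
    mul_nonpos_of_nonneg_of_nonpos ha_nonneg hint_pi
  linarith
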